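/- arXiv:math/0604160 — 6 statements merged into one kernel-verified Lean document; each statement's English description precedes it below -/
import Mathlib

section
/- Let (N, Γ, φ) be a crossed module of groups and A an abelian group. Let e ∈ C^{0,3} (a function Γ³ → A) satisfy ∂e = 0. Set c = T₁e ∈ C^{1,2}, b = −T₂e ∈ C^{2,1}, and a = −T₃e ∈ C^{3,0}. Then ∂c = 0, ∂'c = ∂b, and ∂'b = ∂a; that is, (c, b, a) is a multiplicator. (Corollary 3.11 of the paper, for a crossed module of groups with constant coefficients.) -/
open scoped Classical

/-- The group of `(k,l)`-cochains with values in `A`: all functions `N^k × Γ^l → A`. -/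
abbrev Cochain (N Γ A : Type*) (k l : ℕ) :=
  (Fin k → N) → (Fin l → Γ) → A

/-- Merge the entries at positions `i` and `i+1` of an `(n+1)`-tuple using multiplication. -/
def mergeAt {G : Type*} [Mul G] {n : ℕ} (g : Fin (n + 1) → G) (i : Fin n) : Fin n → G :=
  fun j =>
    if (j : ℕ) < (i : ℕ) then g (Fin.castSucc j)
    else if (j : ℕ) = (i : ℕ) then g (Fin.castSucc i) * g (Fin.succ i)
    else g (Fin.succ j)

/-- The simplicial differential `∂ : C^{k,l} → C^{k,l+1}` (in the `Γ`-direction),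
using the right action `act` of `Γ` on `N`. -/
def del {N Γ A : Type*} [Mul Γ] [AddCommGroup A] (act : N → Γ → N) {k l : ℕ}
    (η : Cochain N Γ A k l) : Cochain N Γ A k (l + 1) :=
  fun x g =>
    η (fun p => act (x p) (g 0)) (fun j => g (Fin.succ j))
      + ∑ i : Fin l, ((-1 : ℤ) ^ ((i : ℕ) + 1)) • η x (mergeAt g i)
      + ((-1 : ℤ) ^ (l + 1)) • η x (fun j => g (Fin.castSucc j))

/-- The differential `∂' : C^{k,l} → C^{k+1,l}` (in the `N`-direction). -/
def del' {N Γ A : Type*} [Mul N] [AddCommGroup A] {k l : ℕ}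
    (η : Cochain N Γ A k l) : Cochain N Γ A (k + 1) l :=
  fun x g =>
    η (fun p => x (Fin.succ p)) g
      + ∑ i : Fin k, ((-1 : ℤ) ^ ((i : ℕ) + 1)) • η (mergeAt x i) g
      + ((-1 : ℤ) ^ (k + 1)) • η (fun p => x (Fin.castSucc p)) g

/-- `f : Fin n → Fin n` is a `(k, n-k)`-shuffle: strictly increasing on indices `< k`
and on indices `≥ k`. -/
def IsShuffle {n : ℕ} (k : ℕ) (f : Fin n → Fin n) : Prop :=
  (∀ i j : Fin n, (i : ℕ) < (j : ℕ) → (j : ℕ) < k → f i < f j) ∧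
  (∀ i j : Fin n, (i : ℕ) < (j : ℕ) → k ≤ (i : ℕ) → f i < f j)

/-- The map `f̃_σ : N^k × Γ^l → Γ^{k+l}` associated to a `(k,l)`-shuffle `σ`. -/
def shuffleMap {N Γ : Type*} [Group Γ] (φ : N → Γ) (act : N → Γ → N) {k l : ℕ}
    (σ : Equiv.Perm (Fin (k + l))) (x : Fin k → N) (g : Fin l → Γ) :
    Fin (k + l) → Γ :=
  fun i =>
    if h : k ≤ (σ.symm i : ℕ) then
      g ⟨(σ.symm i : ℕ) - k, by have := (σ.symm i).isLt; omega⟩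
    else
      have hx : ((σ.symm i : ℕ)) < k := by omega
      let P : Γ :=
        (((List.finRange (k + l)).filter
            (fun j : Fin (k + l) => decide ((j : ℕ) < (i : ℕ) ∧ k ≤ (σ.symm j : ℕ)))).map
          (fun j : Fin (k + l) =>
            if h' : k ≤ (σ.symm j : ℕ) then
              g ⟨(σ.symm j : ℕ) - k, by have := (σ.symm j).isLt; omega⟩
            else 1)).prod
      φ (act (x ⟨(σ.symm i : ℕ), hx⟩) P)

/-- The transgression map `T_k : C^{0,p} → C^{k,l}` (where `k + l = p`), given by the
signed sum over all `(k,l)`-shuffles. -/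
noncomputable def Tmap {N Γ A : Type*} [Group Γ] [AddCommGroup A]
    (φ : N → Γ) (act : N → Γ → N) (k l p : ℕ) (h : k + l = p)
    (ω : Cochain N Γ A 0 p) : Cochain N Γ A k l :=
  fun x g =>
    ∑ σ : Equiv.Perm (Fin (k + l)),
      if IsShuffle k ⇑σ then
        ((Equiv.Perm.sign σ : ℤ)) •
          ω Fin.elim0 (fun i => shuffleMap φ act σ x g (Fin.cast h.symm i))
      else 0
section Aux
open scoped Classical

def p012 : Equiv.Perm (Fin 3) := ⟨![0,1,2], ![0,1,2], by decide, by decide⟩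
def p021 : Equiv.Perm (Fin 3) := ⟨![0,2,1], ![0,2,1], by decide, by decide⟩
def p102 : Equiv.Perm (Fin 3) := ⟨![1,0,2], ![1,0,2], by decide, by decide⟩
def p120 : Equiv.Perm (Fin 3) := ⟨![1,2,0], ![2,0,1], by decide, by decide⟩
def p201 : Equiv.Perm (Fin 3) := ⟨![2,0,1], ![1,2,0], by decide, by decide⟩
def p210 : Equiv.Perm (Fin 3) := ⟨![2,1,0], ![2,1,0], by decide, by decide⟩

theorem sum_perm3 {A : Type*} [AddCommGroup A] (f : Equiv.Perm (Fin 3) → A) :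
    ∑ σ : Equiv.Perm (Fin 3), f σ = f p012 + f p021 + f p102 + f p120 + f p201 + f p210 := by
  rw [show (Finset.univ : Finset (Equiv.Perm (Fin 3))) = {p012, p021, p102, p120, p201, p210} from by decide]
  rw [Finset.sum_insert (by decide), Finset.sum_insert (by decide), Finset.sum_insert (by decide),
    Finset.sum_insert (by decide), Finset.sum_insert (by decide), Finset.sum_singleton]
  abel

theorem Tmap12 {N Γ A : Type*} [Group Γ] [AddCommGroup A] (φ : N → Γ) (act : N → Γ → N)
    (e : Cochain N Γ A 0 3) (x : Fin 1 → N) (g : Fin 2 → Γ) :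
    Tmap φ act 1 2 3 rfl e x g =
      e Fin.elim0 ![φ (act (x 0) 1), g 0, g 1]
        - e Fin.elim0 ![g 0, φ (act (x 0) (g 0)), g 1]
        + e Fin.elim0 ![g 0, g 1, φ (act (x 0) (g 0 * g 1))] := by
  have t1 : (fun i : Fin 3 => shuffleMap (k := 1) (l := 2) φ act p012 x g (Fin.cast rfl i)) =
      ![φ (act (x 0) 1), g 0, g 1] := by
    funext i; fin_cases i <;> simp [shuffleMap, p012, List.finRange]
  have t2 : (fun i : Fin 3 => shuffleMap (k := 1) (l := 2) φ act p102 x g (Fin.cast rfl i)) =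
      ![g 0, φ (act (x 0) (g 0)), g 1] := by
    funext i; fin_cases i <;> simp [shuffleMap, p102, List.finRange]
  have t3 : (fun i : Fin 3 => shuffleMap (k := 1) (l := 2) φ act p201 x g (Fin.cast rfl i)) =
      ![g 0, g 1, φ (act (x 0) (g 0 * g 1))] := by
    funext i; fin_cases i <;> simp [shuffleMap, p201, List.finRange]
  simp only [Tmap]
  rw [sum_perm3 (f := fun σ => if IsShuffle 1 ⇑σ then
    ((Equiv.Perm.sign σ : ℤ)) • e Fin.elim0 (fun i => shuffleMap φ act σ x g (Fin.cast rfl i)) else 0)]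
  rw [if_pos (show IsShuffle 1 ⇑p012 by unfold IsShuffle; exact ⟨by decide, by decide⟩),
      if_neg (show ¬ IsShuffle 1 ⇑p021 by unfold IsShuffle; decide),
      if_pos (show IsShuffle 1 ⇑p102 by unfold IsShuffle; exact ⟨by decide, by decide⟩),
      if_neg (show ¬ IsShuffle 1 ⇑p120 by unfold IsShuffle; decide),
      if_pos (show IsShuffle 1 ⇑p201 by unfold IsShuffle; exact ⟨by decide, by decide⟩),
      if_neg (show ¬ IsShuffle 1 ⇑p210 by unfold IsShuffle; decide)]
  rw [t1, t2, t3,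
    show ((Equiv.Perm.sign p012 : ℤ)) = 1 from by decide,
    show ((Equiv.Perm.sign p102 : ℤ)) = -1 from by decide,
    show ((Equiv.Perm.sign p201 : ℤ)) = 1 from by decide]
  simp only [one_smul, neg_smul, add_zero, zero_add]
  abel
end Aux
section Aux2
open scoped Classical

theorem Tmap21 {N Γ A : Type*} [Group Γ] [AddCommGroup A] (φ : N → Γ) (act : N → Γ → N)
    (e : Cochain N Γ A 0 3) (x : Fin 2 → N) (g : Fin 1 → Γ) :
    Tmap φ act 2 1 3 rfl e x g =
      e Fin.elim0 ![φ (act (x 0) 1), φ (act (x 1) 1), g 0]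
        - e Fin.elim0 ![φ (act (x 0) 1), g 0, φ (act (x 1) (g 0))]
        + e Fin.elim0 ![g 0, φ (act (x 0) (g 0)), φ (act (x 1) (g 0))] := by
  have t1 : (fun i : Fin 3 => shuffleMap (k := 2) (l := 1) φ act p012 x g (Fin.cast rfl i)) =
      ![φ (act (x 0) 1), φ (act (x 1) 1), g 0] := by
    funext i; fin_cases i <;> simp [shuffleMap, p012, List.finRange]
  have t2 : (fun i : Fin 3 => shuffleMap (k := 2) (l := 1) φ act p021 x g (Fin.cast rfl i)) =
      ![φ (act (x 0) 1), g 0, φ (act (x 1) (g 0))] := by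
    funext i; fin_cases i <;> simp [shuffleMap, p021, List.finRange]
  have t3 : (fun i : Fin 3 => shuffleMap (k := 2) (l := 1) φ act p120 x g (Fin.cast rfl i)) =
      ![g 0, φ (act (x 0) (g 0)), φ (act (x 1) (g 0))] := by
    funext i; fin_cases i <;> simp [shuffleMap, p120, List.finRange]
  simp only [Tmap]
  rw [sum_perm3 (f := fun σ => if IsShuffle 2 ⇑σ then
    ((Equiv.Perm.sign σ : ℤ)) • e Fin.elim0 (fun i => shuffleMap φ act σ x g (Fin.cast rfl i)) else 0)]
  rw [if_pos (show IsShuffle 2 ⇑p012 by unfold IsShuffle; exact ⟨by decide, by decide⟩),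
      if_pos (show IsShuffle 2 ⇑p021 by unfold IsShuffle; exact ⟨by decide, by decide⟩),
      if_neg (show ¬ IsShuffle 2 ⇑p102 by unfold IsShuffle; decide),
      if_pos (show IsShuffle 2 ⇑p120 by unfold IsShuffle; exact ⟨by decide, by decide⟩),
      if_neg (show ¬ IsShuffle 2 ⇑p201 by unfold IsShuffle; decide),
      if_neg (show ¬ IsShuffle 2 ⇑p210 by unfold IsShuffle; decide)]
  rw [t1, t2, t3,
    show ((Equiv.Perm.sign p012 : ℤ)) = 1 from by decide,
    show ((Equiv.Perm.sign p021 : ℤ)) = -1 from by decide,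
    show ((Equiv.Perm.sign p120 : ℤ)) = 1 from by decide]
  simp only [one_smul, neg_smul, add_zero, zero_add]
  abel

theorem Tmap30 {N Γ A : Type*} [Group Γ] [AddCommGroup A] (φ : N → Γ) (act : N → Γ → N)
    (e : Cochain N Γ A 0 3) (x : Fin 3 → N) (g : Fin 0 → Γ) :
    Tmap φ act 3 0 3 rfl e x g =
      e Fin.elim0 ![φ (act (x 0) 1), φ (act (x 1) 1), φ (act (x 2) 1)] := by
  have t1 : (fun i : Fin 3 => shuffleMap (k := 3) (l := 0) φ act p012 x g (Fin.cast rfl i)) =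
      ![φ (act (x 0) 1), φ (act (x 1) 1), φ (act (x 2) 1)] := by
    funext i; fin_cases i <;> simp [shuffleMap, p012, List.finRange]
  simp only [Tmap]
  rw [sum_perm3 (f := fun σ => if IsShuffle 3 ⇑σ then
    ((Equiv.Perm.sign σ : ℤ)) • e Fin.elim0 (fun i => shuffleMap φ act σ x g (Fin.cast rfl i)) else 0)]
  rw [if_pos (show IsShuffle 3 ⇑p012 by unfold IsShuffle; exact ⟨by decide, by decide⟩),
      if_neg (show ¬ IsShuffle 3 ⇑p021 by unfold IsShuffle; decide),
      if_neg (show ¬ IsShuffle 3 ⇑p102 by unfold IsShuffle; decide),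
      if_neg (show ¬ IsShuffle 3 ⇑p120 by unfold IsShuffle; decide),
      if_neg (show ¬ IsShuffle 3 ⇑p201 by unfold IsShuffle; decide),
      if_neg (show ¬ IsShuffle 3 ⇑p210 by unfold IsShuffle; decide)]
  rw [t1, show ((Equiv.Perm.sign p012 : ℤ)) = 1 from by decide]
  simp only [one_smul, add_zero, zero_add]
end Aux2
section Aux3
theorem mergeAt2_0 {G : Type*} [Mul G] (g : Fin 3 → G) : mergeAt g 0 = ![g 0 * g 1, g 2] := by
  funext j; fin_cases j <;> rfl
theorem mergeAt2_1 {G : Type*} [Mul G] (g : Fin 3 → G) : mergeAt g 1 = ![g 0, g 1 * g 2] := by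
  funext j; fin_cases j <;> rfl
theorem mergeAt1_0 {G : Type*} [Mul G] (g : Fin 2 → G) : mergeAt g 0 = ![g 0 * g 1] := by
  funext j; fin_cases j <;> rfl
end Aux3


/-- Corollary 3.11: for a crossed module of groups `(N, Γ, φ)` and
constant coefficients `A`, if `e ∈ C^{0,3}` satisfies `∂e = 0`, then with
`c = T₁e`, `b = −T₂e`, `a = −T₃e` one has `∂c = 0`, `∂'c = ∂b` and `∂'b = ∂a`;
that is, `(c, b, a)` is a multiplicator. -/
theorem statement3 {N Γ A : Type*} [Group N] [Group Γ] [AddCommGroup A]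
    (act : N → Γ → N) (φ : N →* Γ)
    (hact_mul : ∀ (x y : N) (g : Γ), act (x * y) g = act x g * act y g)
    (hact_act : ∀ (x : N) (g h : Γ), act (act x g) h = act x (g * h))
    (hact_one : ∀ x : N, act x 1 = x)
    (hequiv : ∀ (x : N) (g : Γ), φ (act x g) = g⁻¹ * φ x * g)
    (hpeiffer : ∀ x y : N, act x (φ y) = y⁻¹ * x * y)
    (e : Cochain N Γ A 0 3) (he : del act e = 0) :
    del act (Tmap (⇑φ) act 1 2 3 rfl e) = 0 ∧
    del' (Tmap (⇑φ) act 1 2 3 rfl e) = del act (-Tmap (⇑φ) act 2 1 3 rfl e) ∧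
    del' (-Tmap (⇑φ) act 2 1 3 rfl e) = del act (-Tmap (⇑φ) act 3 0 3 rfl e) := by
  have hzero : ∀ f : Fin 0 → N, f = Fin.elim0 := fun f => funext fun p => p.elim0
  have HE : ∀ a b c d : Γ,
      e Fin.elim0 ![b, c, d] - e Fin.elim0 ![a * b, c, d] + e Fin.elim0 ![a, b * c, d]
        - e Fin.elim0 ![a, b, c * d] + e Fin.elim0 ![a, b, c] = 0 := by
    intro a b c d
    have h := congrFun (congrFun he Fin.elim0) ![a, b, c, d]
    simp only [del, Pi.zero_apply, Fin.sum_univ_three] at h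
    rw [hzero (fun p => act (Fin.elim0 p) _)] at h
    rw [show (fun j : Fin 3 => (![a,b,c,d] : Fin 4 → Γ) j.succ) = ![b, c, d] from by
          funext j; fin_cases j <;> rfl,
        show mergeAt ![a,b,c,d] 0 = ![a * b, c, d] from by
          funext j; fin_cases j <;> first | rfl | simp [mergeAt],
        show mergeAt ![a,b,c,d] 1 = ![a, b * c, d] from by
          funext j; fin_cases j <;> first | rfl | simp [mergeAt],
        show mergeAt ![a,b,c,d] 2 = ![a, b, c * d] from by
          funext j; fin_cases j <;> first | rfl | simp [mergeAt],
        show (fun j : Fin 3 => (![a,b,c,d] : Fin 4 → Γ) j.castSucc) = ![a, b, c] from by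
          funext j; fin_cases j <;> rfl] at h
    norm_num at h
    linear_combination (norm := abel) h
  refine ⟨?_, ?_, ?_⟩
  · funext x g
    simp only [del, Pi.zero_apply, Fin.sum_univ_two, Tmap12]
    have h1 := HE (φ (x 0)) (g 0) (g 1) (g 2)
    have h2 := HE (g 0) (φ (act (x 0) (g 0))) (g 1) (g 2)
    have h3 := HE (g 0) (g 1) (φ (act (x 0) (g 0 * g 1))) (g 2)
    have h4 := HE (g 0) (g 1) (g 2) (φ (act (x 0) (g 0 * g 1 * g 2)))
    norm_num [mergeAt2_0, mergeAt2_1, Fin.succ_zero_eq_one, Fin.succ_one_eq_two,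
      Fin.castSucc_zero, Fin.castSucc_one, neg_smul, one_smul]
    simp only [hact_one, hact_act, hequiv, mul_inv_rev, mul_assoc, mul_one,
      inv_mul_cancel_left, mul_inv_cancel_left] at h1 h2 h3 h4 ⊢
    linear_combination (norm := abel) -h1 + h2 - h3 + h4
  · funext x g
    simp only [del, del', Pi.neg_apply, Fin.sum_univ_one, Tmap12, Tmap21]
    have k1 := HE (φ (x 0)) (φ (x 1)) (g 0) (g 1)
    have k2 := HE (φ (x 0)) (g 0) (φ (act (x 1) (g 0))) (g 1)
    have k3 := HE (φ (x 0)) (g 0) (g 1) (φ (act (x 1) (g 0 * g 1)))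
    have k4 := HE (g 0) (φ (act (x 0) (g 0))) (φ (act (x 1) (g 0))) (g 1)
    have k5 := HE (g 0) (φ (act (x 0) (g 0))) (g 1) (φ (act (x 1) (g 0 * g 1)))
    have k6 := HE (g 0) (g 1) (φ (act (x 0) (g 0 * g 1))) (φ (act (x 1) (g 0 * g 1)))
    norm_num [mergeAt1_0, Fin.succ_zero_eq_one, Fin.succ_one_eq_two,
      Fin.castSucc_zero, Fin.castSucc_one, neg_smul, one_smul, smul_neg]
    simp only [hact_one, hact_act, hact_mul, map_mul, hequiv, mul_inv_rev, mul_assoc, mul_one,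
      inv_mul_cancel_left, mul_inv_cancel_left] at k1 k2 k3 k4 k5 k6 ⊢
    linear_combination (norm := abel) k1 - k2 + k3 + k4 - k5 + k6
  · funext x g
    simp only [del, del', Pi.neg_apply, Fin.sum_univ_two, Fin.sum_univ_zero, Tmap21, Tmap30]
    have m1 := HE (g 0) (φ (act (x 0) (g 0))) (φ (act (x 1) (g 0))) (φ (act (x 2) (g 0)))
    have m2 := HE (φ (x 0)) (g 0) (φ (act (x 1) (g 0))) (φ (act (x 2) (g 0)))
    have m3 := HE (φ (x 0)) (φ (x 1)) (g 0) (φ (act (x 2) (g 0)))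
    have m4 := HE (φ (x 0)) (φ (x 1)) (φ (x 2)) (g 0)
    norm_num [mergeAt2_0, mergeAt2_1, Fin.succ_zero_eq_one, Fin.succ_one_eq_two,
      Fin.castSucc_zero, Fin.castSucc_one, neg_smul, one_smul, smul_neg]
    simp only [hact_one, hact_act, hact_mul, map_mul, hequiv, mul_inv_rev, mul_assoc, mul_one,
      inv_mul_cancel_left, mul_inv_cancel_left] at m1 m2 m3 m4 ⊢
    linear_combination (norm := abel) m1 - m2 + m3 - m4
end

section
/- Let (N, Γ, φ) be a crossed module of groups and A an abelian group. Say that every η ∈ C^{k,m} is 0-multiplicative, and for r ≥ 1 that η ∈ C^{k,m} is r-multiplicative if there exists an (r−1)-multiplicative β ∈ C^{k+1,m−1} with ∂'η = ∂β. Then for every c ∈ C^{k,n}, every c' ∈ C^{k,n−1}, and every r ≥ 0: c is r-multiplicative if and only if c + ∂c' is r-multiplicative. (Remark 3.10 of the paper: r-multiplicativity depends only on the ∂-cohomology class; group case with constant coefficients.) -/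
open scoped Classical

/-- `η ∈ C^{k,m}` is `r`-multiplicative: every cochain is `0`-multiplicative, and `η`
is `(r+1)`-multiplicative if `∂'η = ∂β` for some `r`-multiplicative `β ∈ C^{k+1,m−1}`. -/
def IsMult {N Γ A : Type*} [Mul N] [Mul Γ] [AddCommGroup A] (act : N → Γ → N) :
    ℕ → (k m : ℕ) → Cochain N Γ A k m → Prop
  | 0, _, _, _ => True
  | r + 1, k, m, η =>
      ∃ (m' : ℕ) (hm : m = m' + 1) (β : Cochain N Γ A (k + 1) m'),
        IsMult act r (k + 1) m' β ∧
        ∀ (x : Fin (k + 1) → N) (g : Fin m → Γ),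
          del' η x g = del act β x fun i => g (Fin.cast hm.symm i)

/-- uniform face map -/
def face {G : Type*} [Mul G] {n : ℕ} (x : Fin (n + 1) → G) (i : Fin (n + 2)) : Fin n → G :=
  fun p =>
    if p.1 + 1 < i.1 then x ⟨p.1, by have := p.isLt; omega⟩
    else if p.1 + 1 = i.1 then
      x ⟨p.1, by have := p.isLt; omega⟩ * x ⟨p.1 + 1, by have := p.isLt; omega⟩
    else x ⟨p.1 + 1, by have := p.isLt; omega⟩

lemma face_zero {G : Type*} [Mul G] {n : ℕ} (x : Fin (n + 1) → G) :
    face x 0 = fun p => x (Fin.succ p) := by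
  funext p
  have := p.isLt
  simp only [face, Fin.val_zero]
  split_ifs <;> first | omega | rfl | contradiction

lemma face_succ_castSucc {G : Type*} [Mul G] {n : ℕ} (x : Fin (n + 1) → G) (i : Fin n) :
    face x ((Fin.castSucc i).succ) = mergeAt x i := by
  funext p
  have hp := p.isLt; have hi := i.isLt
  simp only [face, mergeAt, Fin.val_succ, Fin.coe_castSucc]
  split_ifs <;>
    first
      | rfl
      | omega
      | contradiction
      | (congr 1 <;>
          first
            | rfl
            | exact Fin.ext (by first | omega | (simp only [Fin.coe_castSucc, Fin.val_succ]; omega))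
            | (congr 1 <;>
                exact Fin.ext (by first | omega | (simp only [Fin.coe_castSucc, Fin.val_succ]; omega))))

lemma face_last {G : Type*} [Mul G] {n : ℕ} (x : Fin (n + 1) → G) :
    face x (Fin.last (n + 1)) = fun p => x (Fin.castSucc p) := by
  funext p
  have := p.isLt
  simp only [face, Fin.val_last]
  split_ifs <;> first | omega | rfl | contradiction

lemma del'_eq {N Γ A : Type*} [Mul N] [AddCommGroup A] {k l : ℕ} (η : Cochain N Γ A k l)
    (x : Fin (k + 1) → N) (g : Fin l → Γ) :
    del' η x g = ∑ i : Fin (k + 2), ((-1 : ℤ) ^ (i : ℕ)) • η (face x i) g := by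
  conv_rhs => rw [Fin.sum_univ_succ, Fin.sum_univ_castSucc]
  simp only [face_zero, face_succ_castSucc, Fin.succ_last, face_last, Fin.val_zero,
    Fin.val_succ, Fin.coe_castSucc, Fin.val_last, pow_zero, one_smul]
  simp only [del']
  abel

lemma del_eq {N Γ A : Type*} [Mul Γ] [AddCommGroup A] (act : N → Γ → N) {k l : ℕ}
    (η : Cochain N Γ A k l) (x : Fin k → N) (g : Fin (l + 1) → Γ) :
    del act η x g = ∑ j : Fin (l + 2), ((-1 : ℤ) ^ (j : ℕ)) •
      η (if (j : ℕ) = 0 then (fun p => act (x p) (g 0)) else x) (face g j) := by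
  conv_rhs => rw [Fin.sum_univ_succ, Fin.sum_univ_castSucc]
  simp only [face_zero, face_succ_castSucc, Fin.succ_last, face_last, Fin.val_zero,
    Fin.val_succ, Fin.coe_castSucc, Fin.val_last, pow_zero, one_smul, reduceIte,
    Nat.succ_ne_zero, ite_false]
  simp only [del]
  abel

set_option maxHeartbeats 1000000 in
lemma face_face {G : Type*} [Semigroup G] {n : ℕ} (x : Fin (n + 2) → G)
    (i : Fin (n + 3)) (j : Fin (n + 2)) (h : (j : ℕ) < (i : ℕ)) :
    face (face x i) j =
      face (face x ⟨(j : ℕ), by have := j.isLt; omega⟩) ⟨(i : ℕ) - 1, by have := i.isLt; omega⟩ := by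
  funext p
  have hp := p.isLt; have hi := i.isLt; have hj := j.isLt
  simp only [face, Fin.val_mk]
  split_ifs <;>
    first
      | rfl
      | omega
      | contradiction
      | exact mul_assoc _ _ _
      | exact (mul_assoc _ _ _).symm
      | (congr 1 <;>
          first
            | rfl
            | exact Fin.ext (by omega)
            | exact mul_assoc _ _ _
            | (congr 1 <;> exact Fin.ext (by omega)))

lemma del'_del'_apply {N Γ A : Type*} [Monoid N] [AddCommGroup A] {k m : ℕ}
    (η : Cochain N Γ A k m) (x : Fin (k + 2) → N) (g : Fin m → Γ) :
    del' (del' η) x g = 0 := by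
  rw [del'_eq]
  have step : ∀ i : Fin (k + 1 + 2),
      ((-1 : ℤ) ^ (i : ℕ)) • del' η (face x i) g
        = ∑ j : Fin (k + 2), ((-1 : ℤ) ^ ((i : ℕ) + (j : ℕ))) • η (face (face x i) j) g := by
    intro i
    rw [del'_eq, Finset.smul_sum]
    refine Finset.sum_congr rfl fun j _ => ?_
    rw [smul_smul, ← pow_add]
  simp only [step]
  set F : Fin (k + 1 + 2) × Fin (k + 2) → A :=
    fun p => ((-1 : ℤ) ^ ((p.1 : ℕ) + (p.2 : ℕ))) • η (face (face x p.1) p.2) g with hF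
  have h2 : (∑ i : Fin (k + 1 + 2), ∑ j : Fin (k + 2),
        ((-1 : ℤ) ^ ((i : ℕ) + (j : ℕ))) • η (face (face x i) j) g)
      = ∑ p : Fin (k + 1 + 2) × Fin (k + 2), F p := by
    rw [Fintype.sum_prod_type]
  rw [h2]
  have key : ∑ p ∈ Finset.univ.filter (fun p : Fin (k + 1 + 2) × Fin (k + 2) => (p.2 : ℕ) < (p.1 : ℕ)), F p
      = ∑ p ∈ Finset.univ.filter (fun p : Fin (k + 1 + 2) × Fin (k + 2) => ¬ (p.2 : ℕ) < (p.1 : ℕ)), (- F p) := by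
    refine Finset.sum_nbij'
      (fun p => (⟨(p.2 : ℕ), by have := p.2.isLt; omega⟩, ⟨(p.1 : ℕ) - 1, by have := p.1.isLt; omega⟩))
      (fun p => (⟨(p.2 : ℕ) + 1, by have := p.2.isLt; omega⟩, ⟨min (p.1 : ℕ) (k + 1), by omega⟩))
      ?_ ?_ ?_ ?_ ?_
    · intro p hp
      simp only [Finset.mem_filter, Finset.mem_univ, true_and] at hp ⊢
      omega
    · intro p hp
      simp only [Finset.mem_filter, Finset.mem_univ, true_and] at hp ⊢
      omega
    · intro p hp
      simp only [Finset.mem_filter, Finset.mem_univ, true_and] at hp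
      ext <;> simp <;> omega
    · intro p hp
      simp only [Finset.mem_filter, Finset.mem_univ, true_and] at hp
      ext <;> simp <;> omega
    · intro p hp
      simp only [Finset.mem_filter, Finset.mem_univ, true_and] at hp
      simp only [hF]
      rw [face_face x p.1 p.2 hp]
      have hsign : ((p.1 : ℕ)) + (p.2 : ℕ) = ((p.2 : ℕ) + ((p.1 : ℕ) - 1)) + 1 := by omega
      rw [hsign, pow_succ]
      simp [neg_smul, mul_neg]
  rw [← Finset.sum_filter_add_sum_filter_not Finset.univ
    (fun p : Fin (k + 1 + 2) × Fin (k + 2) => (p.2 : ℕ) < (p.1 : ℕ)) F, key,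
    Finset.sum_neg_distrib, neg_add_cancel]

lemma face_act {N Γ : Type*} [Mul N] (act : N → Γ → N)
    (hact_mul : ∀ (x y : N) (g : Γ), act (x * y) g = act x g * act y g)
    {n : ℕ} (x : Fin (n + 1) → N) (i : Fin (n + 2)) (g0 : Γ) :
    face (fun p => act (x p) g0) i = fun p => act (face x i p) g0 := by
  funext p
  simp only [face]
  split_ifs <;> first | rfl | rw [hact_mul]

lemma del_del'_comm {N Γ A : Type*} [Mul N] [Mul Γ] [AddCommGroup A] (act : N → Γ → N)
    (hact_mul : ∀ (x y : N) (g : Γ), act (x * y) g = act x g * act y g)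
    {k m : ℕ} (η : Cochain N Γ A k m) (x : Fin (k + 1) → N) (g : Fin (m + 1) → Γ) :
    del' (del act η) x g = del act (del' η) x g := by
  rw [del'_eq, del_eq act (del' η) x g]
  have lhs_step : ∀ i : Fin (k + 2),
      ((-1 : ℤ) ^ (i : ℕ)) • del act η (face x i) g
        = ∑ j : Fin (m + 2), ((-1 : ℤ) ^ (i : ℕ)) • (((-1 : ℤ) ^ (j : ℕ)) •
            η (face (if (j : ℕ) = 0 then (fun p => act (x p) (g 0)) else x) i) (face g j)) := by
    intro i
    rw [del_eq act η (face x i) g, Finset.smul_sum]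
    refine Finset.sum_congr rfl fun j _ => ?_
    by_cases hj : (j : ℕ) = 0
    · simp only [hj, if_pos, ite_true, reduceIte, face_act act hact_mul]
    · simp only [hj, if_neg, ite_false, reduceIte]
  have rhs_step : ∀ j : Fin (m + 2),
      ((-1 : ℤ) ^ (j : ℕ)) • del' η (if (j : ℕ) = 0 then (fun p => act (x p) (g 0)) else x) (face g j)
        = ∑ i : Fin (k + 2), ((-1 : ℤ) ^ (j : ℕ)) • (((-1 : ℤ) ^ (i : ℕ)) •
            η (face (if (j : ℕ) = 0 then (fun p => act (x p) (g 0)) else x) i) (face g j)) := by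
    intro j
    rw [del'_eq, Finset.smul_sum]
  simp only [lhs_step, rhs_step]
  rw [Finset.sum_comm]
  refine Finset.sum_congr rfl fun j _ => Finset.sum_congr rfl fun i _ => ?_
  rw [smul_comm]

lemma del_add_apply {N Γ A : Type*} [Mul Γ] [AddCommGroup A] (act : N → Γ → N) {k l : ℕ}
    (η₁ η₂ : Cochain N Γ A k l) (x : Fin k → N) (g : Fin (l + 1) → Γ) :
    del act (η₁ + η₂) x g = del act η₁ x g + del act η₂ x g := by
  simp only [del, Pi.add_apply, smul_add, Finset.sum_add_distrib]
  abel

lemma del'_add_apply {N Γ A : Type*} [Mul N] [AddCommGroup A] {k l : ℕ}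
    (η₁ η₂ : Cochain N Γ A k l) (x : Fin (k + 1) → N) (g : Fin l → Γ) :
    del' (η₁ + η₂) x g = del' η₁ x g + del' η₂ x g := by
  simp only [del', Pi.add_apply, smul_add, Finset.sum_add_distrib]
  abel

lemma del_neg_apply {N Γ A : Type*} [Mul Γ] [AddCommGroup A] (act : N → Γ → N) {k l : ℕ}
    (η : Cochain N Γ A k l) (x : Fin k → N) (g : Fin (l + 1) → Γ) :
    del act (-η) x g = - del act η x g := by
  simp only [del, Pi.neg_apply, smul_neg, Finset.sum_neg_distrib]
  abel

lemma isMult_add_del' {N Γ A : Type*} [Monoid N] [Mul Γ] [AddCommGroup A] (act : N → Γ → N)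
    (r k m : ℕ) (η : Cochain N Γ A (k + 1) m) (d : Cochain N Γ A k m)
    (h : IsMult act r (k + 1) m η) : IsMult act r (k + 1) m (η + del' d) := by
  cases r with
  | zero => trivial
  | succ r =>
    obtain ⟨m', hm, β, hβ, heq⟩ := h
    refine ⟨m', hm, β, hβ, fun x g => ?_⟩
    rw [del'_add_apply, del'_del'_apply, add_zero, heq]

lemma isMult_add_del {N Γ A : Type*} [Monoid N] [Mul Γ] [AddCommGroup A] (act : N → Γ → N)
    (hact_mul : ∀ (x y : N) (g : Γ), act (x * y) g = act x g * act y g)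
    (r : ℕ) : ∀ (k m : ℕ) (η : Cochain N Γ A k (m + 1)) (c' : Cochain N Γ A k m),
    IsMult act r k (m + 1) η → IsMult act r k (m + 1) (η + del act c') := by
  induction r with
  | zero => intro k m η c' _; trivial
  | succ r ih =>
    intro k m η c' h
    obtain ⟨m', hm, β, hβ, heq⟩ := h
    have hm' : m' = m := by omega
    subst hm'
    refine ⟨m', hm, β + del' c', isMult_add_del' act r k m' β c' hβ, fun x g => ?_⟩
    have hg : (fun i => g (Fin.cast hm.symm i)) = g := funext fun i => congrArg g (Fin.ext rfl)
    rw [del'_add_apply, heq, del_add_apply, hg, del_del'_comm act hact_mul]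


/-- Remark 3.10: for a crossed module of groups `(N, Γ, φ)` and
constant coefficients `A`, `r`-multiplicativity only depends on the `∂`-cohomology
class: `c ∈ C^{k,n}` is `r`-multiplicative iff `c + ∂c'` is, for any `c' ∈ C^{k,n−1}`. -/
theorem statement5 {N Γ A : Type*} [Group N] [Group Γ] [AddCommGroup A]
    (act : N → Γ → N) (φ : N →* Γ)
    (hact_mul : ∀ (x y : N) (g : Γ), act (x * y) g = act x g * act y g)
    (hact_act : ∀ (x : N) (g h : Γ), act (act x g) h = act x (g * h))
    (hact_one : ∀ x : N, act x 1 = x)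
    (hequiv : ∀ (x : N) (g : Γ), φ (act x g) = g⁻¹ * φ x * g)
    (hpeiffer : ∀ x y : N, act x (φ y) = y⁻¹ * x * y)
    (k m r : ℕ) (c : Cochain N Γ A k (m + 1)) (c' : Cochain N Γ A k m) :
    IsMult act r k (m + 1) c ↔ IsMult act r k (m + 1) (c + del act c') := by
  constructor
  · exact isMult_add_del act hact_mul r k m c c'
  · intro h
    have h2 := isMult_add_del act hact_mul r k m (c + del act c') (-c') h
    have he : (c + del act c') + del act (-c') = c := by
      funext x g
      simp only [Pi.add_apply, del_neg_apply]
      abel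
    rwa [he] at h2
end

section
/- Let k, l ≥ 0, let σ be a (k+1,l)-shuffle of {1,…,k+l+1}, let m ∈ {1,…,k+1}, and set j = σ(m). For 1 ≤ r ≤ k+l+1 let ε_r : {1,…,k+l} → {1,…,k+l+1} denote the unique strictly increasing map whose image is {1,…,k+l+1}∖{r}. Then: (a) there is a unique map τ : {1,…,k+l} → {1,…,k+l} with ε_j ∘ τ = σ ∘ ε_m; (b) this τ is a bijection and is a (k,l)-shuffle; and (c) sign(τ) = (−1)^{j−m} sign(σ). (The key combinatorial step, claims (i) in case 1 of the proof of Lemma 3.2 of the paper: removing a black ball from a shuffle.) -/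
/-- claims (i), case 1, in the proof of Lemma 3.2: removing a black
ball from a shuffle. Let `σ` be a `(k+1,l)`-shuffle, `m` an index in the first block,
and `j = σ(m)`.  Here `ε_r = Fin.succAbove r` is the strictly increasing injection
omitting `r`.  Then there is a unique `τ : Fin (k+l) → Fin (k+l)` with
`ε_j ∘ τ = σ ∘ ε_m`; it is a bijection, a `(k,l)`-shuffle, and its sign satisfies
`sign τ = (−1)^{j−m} sign σ`. -/
theorem statement9 (k l : ℕ) (σ : Equiv.Perm (Fin (k + l + 1)))
    (hσ : IsShuffle (k + 1) ⇑σ) (m : Fin (k + l + 1)) (hm : (m : ℕ) < k + 1) :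
    ∃ τ : Fin (k + l) → Fin (k + l),
      (∀ i : Fin (k + l), Fin.succAbove (σ m) (τ i) = σ (Fin.succAbove m i)) ∧
      (∀ τ' : Fin (k + l) → Fin (k + l),
          (∀ i : Fin (k + l), Fin.succAbove (σ m) (τ' i) = σ (Fin.succAbove m i)) →
          τ' = τ) ∧
      ∃ hbij : Function.Bijective τ,
        IsShuffle k τ ∧
        Equiv.Perm.sign (Equiv.ofBijective τ hbij)
          = (-1 : ℤˣ) ^ ((σ m : ℕ) - (m : ℕ)) * Equiv.Perm.sign σ := by

  classical
  -- the permutation `ρ` fixing 0 obtained by conjugating with cycleRanges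
  set j : Fin (k + l + 1) := σ m with hj
  set ρ : Equiv.Perm (Fin (k + l + 1)) :=
    (Fin.cycleRange j) * σ * (Fin.cycleRange m)⁻¹ with hρ
  have hinv0 : (Fin.cycleRange m)⁻¹ 0 = m := by
    rw [Equiv.Perm.inv_eq_iff_eq, Fin.cycleRange_self]
  have hρ0 : ρ 0 = 0 := by
    simp only [hρ, Equiv.Perm.mul_apply, hinv0, ← hj, Fin.cycleRange_self]
  have hsm : ∀ i : Fin (k + l), (Fin.cycleRange m)⁻¹ i.succ = m.succAbove i := by
    intro i
    rw [Equiv.Perm.inv_eq_iff_eq, Fin.cycleRange_succAbove]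
  have hρsucc : ∀ i : Fin (k + l),
      ρ i.succ = Fin.cycleRange j (σ (m.succAbove i)) := by
    intro i
    simp only [hρ, Equiv.Perm.mul_apply, hsm]
  have hne : ∀ i : Fin (k + l), ρ i.succ ≠ 0 := by
    intro i h
    exact Fin.succ_ne_zero i (ρ.injective (h.trans hρ0.symm))
  set τ : Fin (k + l) → Fin (k + l) := fun i => (ρ i.succ).pred (hne i) with hτdef
  have hτsucc : ∀ i : Fin (k + l), (τ i).succ = ρ i.succ := by
    intro i; simp [hτdef]
  have hτ : ∀ i : Fin (k + l), Fin.succAbove j (τ i) = σ (m.succAbove i) := by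
    intro i
    apply (Fin.cycleRange j).injective
    rw [Fin.cycleRange_succAbove, hτsucc, hρsucc]
  have hinj : Function.Injective τ := by
    intro a b hab
    have h1 : σ (m.succAbove a) = σ (m.succAbove b) := by
      rw [← hτ, ← hτ, hab]
    exact Fin.succAbove_right_injective (σ.injective h1)
  have hbij : Function.Bijective τ := Finite.injective_iff_bijective.mp hinj
  refine ⟨τ, hτ, ?_, hbij, ?_, ?_⟩
  · -- uniqueness
    intro τ' h'
    funext i
    exact Fin.succAbove_right_injective ((h' i).trans (hτ i).symm)
  · -- shuffle
    constructor
    · intro a b hab hbk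
      have h1 : m.succAbove a < m.succAbove b :=
        Fin.succAbove_lt_succAbove_iff.mpr hab
      have h2 : ((m.succAbove b : Fin (k + l + 1)) : ℕ) < k + 1 := by
        by_cases h : b.castSucc < m
        · rw [Fin.succAbove_of_castSucc_lt _ _ h]
          simp only [Fin.coe_castSucc]
          omega
        · rw [Fin.succAbove_of_le_castSucc _ _ (le_of_not_gt h)]
          simp only [Fin.val_succ]
          omega
      rw [← Fin.succAbove_lt_succAbove_iff (p := j), hτ, hτ]
      exact hσ.1 _ _ h1 h2
    · intro a b hab hka
      have h1 : m.succAbove a < m.succAbove b :=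
        Fin.succAbove_lt_succAbove_iff.mpr hab
      have h2 : k + 1 ≤ ((m.succAbove a : Fin (k + l + 1)) : ℕ) := by
        have hma : m ≤ a.castSucc := by
          rw [Fin.le_def]
          simp only [Fin.coe_castSucc]
          omega
        rw [Fin.succAbove_of_le_castSucc _ _ hma]
        simp only [Fin.val_succ]
        omega
      rw [← Fin.succAbove_lt_succAbove_iff (p := j), hτ, hτ]
      exact hσ.2 _ _ h1 h2
  · -- sign
    have hE : ρ = Equiv.Perm.decomposeFin.symm (0, Equiv.ofBijective τ hbij) := by
      ext x
      refine Fin.cases ?_ ?_ x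
      · rw [hρ0, Equiv.Perm.decomposeFin_symm_apply_zero]
      · intro i
        rw [Equiv.Perm.decomposeFin_symm_apply_succ, Equiv.swap_self,
          Equiv.refl_apply]
        exact congrArg Fin.val (hτsucc i).symm
    have h1 : Equiv.Perm.sign ρ = Equiv.Perm.sign (Equiv.ofBijective τ hbij) := by
      rw [hE, Equiv.Perm.decomposeFin.symm_sign]
      simp
    have h2 : Equiv.Perm.sign ρ
        = (-1 : ℤˣ) ^ (j : ℕ) * Equiv.Perm.sign σ * (-1 : ℤˣ) ^ (m : ℕ) := by
      simp [hρ, Fin.sign_cycleRange, mul_comm, mul_assoc, mul_left_comm]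
    -- m ≤ j
    have key : ∀ t (ht : t < k + l + 1), t ≤ (m : ℕ) → t ≤ ((σ ⟨t, ht⟩ : Fin (k+l+1)) : ℕ) := by
      intro t
      induction t with
      | zero => intro _ _; exact Nat.zero_le _
      | succ s ih =>
        intro ht hsm
        have hs : s < k + l + 1 := by omega
        have h1 := ih hs (by omega)
        have hlt : σ ⟨s, hs⟩ < σ ⟨s + 1, ht⟩ :=
          hσ.1 ⟨s, hs⟩ ⟨s + 1, ht⟩ (Nat.lt_succ_self s) (by show s + 1 < k + 1; omega)
        have h2 := Fin.lt_def.mp hlt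
        exact Nat.succ_le_of_lt (lt_of_le_of_lt h1 h2)
    have hle : (m : ℕ) ≤ (j : ℕ) := by
      have := key (m : ℕ) m.isLt le_rfl
      simpa [hj] using this
    have hpow : (-1 : ℤˣ) ^ (j : ℕ) * (-1 : ℤˣ) ^ (m : ℕ)
        = (-1 : ℤˣ) ^ ((j : ℕ) - (m : ℕ)) := by
      rw [← pow_add]
      have heq : (j : ℕ) + (m : ℕ) = ((j : ℕ) - (m : ℕ)) + 2 * (m : ℕ) := by omega
      rw [heq, pow_add, pow_mul]
      simp
    calc Equiv.Perm.sign (Equiv.ofBijective τ hbij)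
        = (-1 : ℤˣ) ^ (j : ℕ) * Equiv.Perm.sign σ * (-1 : ℤˣ) ^ (m : ℕ) := by
          rw [← h1, h2]
      _ = ((-1 : ℤˣ) ^ (j : ℕ) * (-1 : ℤˣ) ^ (m : ℕ)) * Equiv.Perm.sign σ := by
          rw [mul_right_comm]
      _ = (-1 : ℤˣ) ^ ((j : ℕ) - (m : ℕ)) * Equiv.Perm.sign σ := by rw [hpow]
end

section
/- Let k, l ≥ 0, let σ be a (k,l)-shuffle of {1,…,k+l}, and let 1 ≤ j ≤ k+l−1 be such that exactly one of σ⁻¹(j), σ⁻¹(j+1) lies in {1,…,k}. Let σ' = τ_{j,j+1} ∘ σ, where τ_{j,j+1} is the transposition exchanging j and j+1. Then: (a) σ' is a (k,l)-shuffle; (b) sign(σ') = −sign(σ); and (c) defining b^σ(i) = #{p ∈ σ({1,…,k}) : p ≤ i} and c^σ(i) = i − b^σ(i) for 0 ≤ i ≤ k+l, one has b^σ(ε_j(i)) = b^{σ'}(ε_j(i)) and c^σ(ε_j(i)) = c^{σ'}(ε_j(i)) for all 0 ≤ i ≤ k+l−1, where ε_j : {0,…,k+l−1} → {0,…,k+l}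 is the unique strictly increasing map omitting the value j. (The cancellation step, case 3 of the proof of Lemma 3.2 of the paper: the terms indexed by (j,σ) and (j, τ_{j,j+1}∘σ) cancel.) -/
/-- `b^σ(i)`: the number of elements of `B_σ = σ({0,…,k−1})` among the first `i`
positions, i.e. `#(B_σ ∩ {0,…,i−1})`. -/
def shuffleB {n : ℕ} (k : ℕ) (σ : Equiv.Perm (Fin n)) (i : ℕ) : ℕ :=
  (Finset.univ.filter (fun q : Fin n => (q : ℕ) < k ∧ (σ q : ℕ) < i)).card

lemma swap_val {n : ℕ} (a b x : Fin n) :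
    ((Equiv.swap a b x : Fin n) : ℕ) = if x = a then (b : ℕ) else if x = b then (a : ℕ) else x := by
  rw [Equiv.swap_apply_def]
  split_ifs <;> rfl

/-- cancellation step, case 3 of the proof of Lemma 3.2. Let `σ` be a
`(k,l)`-shuffle and `j` (0-based) such that exactly one of `σ⁻¹(j)`, `σ⁻¹(j+1)` lies in
the first block, and let `σ' = τ_{j,j+1} ∘ σ`.  Then `σ'` is a `(k,l)`-shuffle,
`sign σ' = −sign σ`, and `b^σ`, `c^σ = id − b^σ` agree with `b^{σ'}`, `c^{σ'}` on the
image of the increasing injection `ε` omitting `j+1` (0-based), i.e. at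
`ε(i) = if i ≤ j then i else i+1` for all `0 ≤ i ≤ k+l−1`. -/
theorem statement10 (k l : ℕ) (σ σ' : Equiv.Perm (Fin (k + l)))
    (hσ : IsShuffle k ⇑σ) (j : ℕ) (hj : j + 1 < k + l)
    (hone : (((σ.symm ⟨j, by omega⟩ : Fin (k + l)) : ℕ) < k)
              ≠ (((σ.symm ⟨j + 1, hj⟩ : Fin (k + l)) : ℕ) < k))
    (hσ' : σ' = σ.trans (Equiv.swap (⟨j, by omega⟩ : Fin (k + l)) ⟨j + 1, hj⟩)) :
    IsShuffle k ⇑σ' ∧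
    Equiv.Perm.sign σ' = -Equiv.Perm.sign σ ∧
    ∀ i : ℕ, i < k + l →
      shuffleB k σ (if i ≤ j then i else i + 1)
          = shuffleB k σ' (if i ≤ j then i else i + 1) ∧
      (if i ≤ j then i else i + 1) - shuffleB k σ (if i ≤ j then i else i + 1)
          = (if i ≤ j then i else i + 1) - shuffleB k σ' (if i ≤ j then i else i + 1) := by
  have hjlt : j < k + l := by omega
  have hsame : ∀ p q : Fin (k + l), ((p : ℕ) < k ↔ (q : ℕ) < k) →
      (σ p : ℕ) = j → (σ q : ℕ) ≠ j + 1 := by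
    intro p q hblock hp hq
    have hp' : σ.symm ⟨j, hjlt⟩ = p := by
      apply σ.symm_apply_eq.mpr; exact (Fin.ext hp).symm
    have hq' : σ.symm ⟨j + 1, hj⟩ = q := by
      apply σ.symm_apply_eq.mpr; exact (Fin.ext hq).symm
    apply hone
    rw [show (⟨j, by omega⟩ : Fin (k+l)) = ⟨j, hjlt⟩ from rfl, hp', hq']
    exact propext hblock
  have hval : ∀ q : Fin (k + l), (σ' q : ℕ) =
      if (σ q : ℕ) = j then j + 1 else if (σ q : ℕ) = j + 1 then j else (σ q : ℕ) := by
    intro q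
    rw [hσ']
    simp only [Equiv.trans_apply, swap_val]
    split_ifs <;> simp_all [Fin.ext_iff]
  have hkey : ∀ p q : Fin (k + l), ((p : ℕ) < k ↔ (q : ℕ) < k) → σ p < σ q →
      σ' p < σ' q := by
    intro p q hblock hlt
    have h1 := hsame p q hblock
    have h2 := hsame q p hblock.symm
    rw [Fin.lt_def] at hlt ⊢
    rw [hval p, hval q]
    split_ifs <;> omega
  refine ⟨⟨fun p q hpq hq => hkey p q (by omega) (hσ.1 p q hpq hq),
          fun p q hpq hp => hkey p q (by omega) (hσ.2 p q hpq hp)⟩, ?_, ?_⟩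
  · have hne : (⟨j, by omega⟩ : Fin (k + l)) ≠ ⟨j + 1, hj⟩ := by
      simp [Fin.ext_iff]
    have : σ' = (Equiv.swap (⟨j, by omega⟩ : Fin (k + l)) ⟨j + 1, hj⟩) * σ := hσ'
    rw [this, map_mul, Equiv.Perm.sign_swap hne, neg_one_mul]
  · intro i hi
    have hmain : shuffleB k σ (if i ≤ j then i else i + 1)
        = shuffleB k σ' (if i ≤ j then i else i + 1) := by
      unfold shuffleB
      congr 1
      apply Finset.filter_congr
      intro q _
      rw [hval q]
      split_ifs <;> omega
    exact ⟨hmain, by rw [hmain]⟩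
end

section
/- For pairs (k,l), (k',l') of natural numbers, consider triples (ψ, u, f), where ψ : F_k → F_{k'} is a group homomorphism between the free groups on k and k' generators, u = (u₀,…,u_l) ∈ (F_{k'})^{l+1}, and f : {0,…,l} → {0,…,l'} is nondecreasing. Declare (ψ, u, f) ∼ (ψ₁, u₁, f) if there exists v ∈ F_{k'} with ψ₁(w) = v⁻¹ ψ(w) v for all w ∈ F_k and (u₁)_i = v⁻¹ u_i for all 0 ≤ i ≤ l. Define the composition of (ψ, u, f) : (k,l) → (k',l') with (ψ', u', f') : (k',l') → (k'',l'') to be (ψ'', u'', f'') with ψ'' = ψ' ∘ ψ, f'' = f' ∘ f, and u''_i = ψ'(u_i) · u'_{f(i)}. Then: (a) ∼ is an equivalence relation; (b) the composition is associative on representatives; and (c) the composition descends to ∼-equivalence classes, i.e., if (ψ,u,f) ∼ (ψ₁,u₁,f) and (ψ',u',f') ∼ (ψ'₁,u'₁,f'), then the composite of (ψ,u,f) and (ψ',u',f') is ∼-equivalent to the composite of (ψ₁,u₁,f) and (ψ'₁,u'₁,f'). (The content of Proposition 2.4 of the paper describing morphisms and composition in the category 𝔽Δ.) -/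
/-- A representative of a morphism `(k,l) → (k',l')` in the category `𝔽Δ`: a triple
`(ψ, u, f)` where `ψ : F_k → F_{k'}` is a homomorphism of free groups,
`u = (u₀,…,u_l) ∈ (F_{k'})^{l+1}`, and `f : {0,…,l} → {0,…,l'}` is nondecreasing. -/
structure FDHom (k l k' l' : ℕ) where
  ψ : FreeGroup (Fin k) →* FreeGroup (Fin k')
  u : Fin (l + 1) → FreeGroup (Fin k')
  f : Fin (l + 1) → Fin (l' + 1)
  hf : Monotone f

/-- The equivalence relation on triples: `(ψ,u,f) ∼ (ψ₁,u₁,f)` iff there is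
`v ∈ F_{k'}` with `ψ₁(w) = v⁻¹ ψ(w) v` for all `w` and `(u₁)_i = v⁻¹ u_i` for all `i`. -/
def FDrel {k l k' l' : ℕ} (P Q : FDHom k l k' l') : Prop :=
  P.f = Q.f ∧ ∃ v : FreeGroup (Fin k'),
    (∀ w : FreeGroup (Fin k), Q.ψ w = v⁻¹ * P.ψ w * v) ∧
    ∀ i : Fin (l + 1), Q.u i = v⁻¹ * P.u i

/-- Composition of representatives:
`(ψ',u',f') ∘ (ψ,u,f) = (ψ'∘ψ, (ψ'(u_i)·u'_{f(i)})_i, f'∘f)`. -/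
def FDcomp {k l k' l' k'' l'' : ℕ} (Q : FDHom k' l' k'' l'') (P : FDHom k l k' l') :
    FDHom k l k'' l'' :=
  ⟨Q.ψ.comp P.ψ, fun i => Q.ψ (P.u i) * Q.u (P.f i), Q.f ∘ P.f, Q.hf.comp P.hf⟩

/-- Proposition 2.4: `∼` is an equivalence relation, the composition
of representatives is associative, and the composition descends to `∼`-equivalence
classes. -/
theorem statement13 :
    (∀ k l k' l' : ℕ, Equivalence (@FDrel k l k' l')) ∧
    (∀ (k₀ l₀ k₁ l₁ k₂ l₂ k₃ l₃ : ℕ)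
        (P : FDHom k₀ l₀ k₁ l₁) (Q : FDHom k₁ l₁ k₂ l₂) (R : FDHom k₂ l₂ k₃ l₃),
        FDcomp R (FDcomp Q P) = FDcomp (FDcomp R Q) P) ∧
    (∀ (k₀ l₀ k₁ l₁ k₂ l₂ : ℕ)
        (P P₁ : FDHom k₀ l₀ k₁ l₁) (Q Q₁ : FDHom k₁ l₁ k₂ l₂),
        FDrel P P₁ → FDrel Q Q₁ → FDrel (FDcomp Q P) (FDcomp Q₁ P₁)) := by

  refine ⟨?_, ?_, ?_⟩
  · intro k l k' l'
    constructor
    · intro P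
      exact ⟨rfl, 1, by simp, by simp⟩
    · rintro P Q ⟨hf, v, hψ, hu⟩
      refine ⟨hf.symm, v⁻¹, fun w => ?_, fun i => ?_⟩
      · rw [hψ w]; group
      · rw [hu i]; group
    · rintro P Q R ⟨hf, v, hψ, hu⟩ ⟨hf', v', hψ', hu'⟩
      refine ⟨hf.trans hf', v * v', fun w => ?_, fun i => ?_⟩
      · rw [hψ' w, hψ w]; group
      · rw [hu' i, hu i]; group
  · intro k₀ l₀ k₁ l₁ k₂ l₂ k₃ l₃ P Q R
    simp only [FDcomp, MonoidHom.comp_apply]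
    congr 1
    funext i; simp [mul_assoc]
  · rintro k₀ l₀ k₁ l₁ k₂ l₂ P P₁ Q Q₁ ⟨hf, v, hψ, hu⟩ ⟨hf', v', hψ', hu'⟩
    refine ⟨?_, Q.ψ v * v', fun w => ?_, fun i => ?_⟩
    · show Q.f ∘ P.f = Q₁.f ∘ P₁.f
      rw [hf, hf']
    · simp only [FDcomp, MonoidHom.comp_apply]
      rw [hψ' _, hψ w]
      simp [mul_assoc]
    · simp only [FDcomp]
      rw [hψ' _, hu i, hu' _, hf]
      simp [mul_assoc]
end

section
/- Let (a,b,c) : (k,l) → (k',l') and (a',b',c') : (k',l') → (k'',l'') be Δ₂-morphisms (triples with a or b equal to ∅, as in the category Δ₂, with its composition law). In the free group F_{k'} on generators x₁,…,x_{k'} write y_i = x₁⋯x_i (y₀ = 1), and likewise in F_{k''}. Define F(a,b,c) = (ψ_a, u_b, c), where ψ_a : F_k → F_{k'} is the homomorphism with ψ_a(x_i) = y_{a(i−1)}⁻¹ y_{a(i)} and (u_b)_i = y_{b(i)}, with the conventions a(i) = 0 for all i if a = ∅ and b(i) = 0 for all i if b = ∅. Then F is compatible with composition up to the 𝔽Δ-equivalence: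 F((a',b',c') ∘ (a,b,c)) ∼ F(a',b',c') ∘ F(a,b,c), where the right-hand composition is (ψ',u',f') ∘ (ψ,u,f) = (ψ'∘ψ, (ψ'(u_i)·u'_{f(i)})_i, f'∘f), and (ψ,u,f) ∼ (ψ₁,u₁,f) means there exists v with ψ₁(w) = v⁻¹ψ(w)v for all w and (u₁)_i = v⁻¹u_i for all i. (The 'simple calculation' of Section 2.6 of the paper showing that the reduced Δ₂ category embeds in 𝔽Δ.) -/
/-- A morphism `(k,l) → (k',l')` in the category `Δ₂`. -/
structure D2Hom (k l k' l' : ℕ) where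
  a : Option (Fin (k + 1) →o Fin (k' + 1))
  b : Option (Fin (l + 1) →o Fin (k' + 1))
  c : Fin (l + 1) →o Fin (l' + 1)
  hab : a = none ∨ b = none

/-- Composition in `Δ₂`:
`(a',∅,c') ∘ (a,∅,c) = (a'∘a, ∅, c'∘c)`,
`(a',∅,c') ∘ (∅,b,c) = (∅, a'∘b, c'∘c)`,
`(∅,b',c') ∘ (a,b,c) = (∅, b'∘c, c'∘c)`. -/
def D2comp {k l k' l' k'' l'' : ℕ} (G : D2Hom k' l' k'' l'') (F : D2Hom k l k' l') :
    D2Hom k l k'' l'' :=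
  match G.b with
  | some b' => ⟨none, some (b'.comp F.c), G.c.comp F.c, Or.inl rfl⟩
  | none =>
      { a := G.a.bind fun a' => F.a.map fun af => a'.comp af
        b := G.a.bind fun a' => F.b.map fun bf => a'.comp bf
        c := G.c.comp F.c
        hab := by
          rcases F.hab with h | h
          · left; cases G.a <;> simp [h]
          · right; cases G.a <;> simp [h] }

/-- `y_m = x₁ ⋯ x_m ∈ F_{k'}` (0-based: the ordered product of the generators with
index `< m`). -/
def yElt (k' : ℕ) (m : ℕ) : FreeGroup (Fin k') :=
  (((List.finRange k').filter (fun t : Fin k' => decide ((t : ℕ) < m))).map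
    FreeGroup.of).prod

/-- Evaluation of an optional order-preserving map, with the convention `∅(i) = 0`. -/
def optApply {p k' : ℕ} (o : Option (Fin (p + 1) →o Fin (k' + 1))) (i : Fin (p + 1)) : ℕ :=
  match o with
  | none => 0
  | some f => (f i : ℕ)

/-- The embedding `F : Δ₂ → 𝔽Δ`, `F(a,b,c) = (ψ_a, u_b, c)`, where
`ψ_a(x_i) = y_{a(i−1)}⁻¹ y_{a(i)}` and `(u_b)_i = y_{b(i)}`, with the conventions
`a(i) = 0` if `a = ∅` and `b(i) = 0` if `b = ∅`. -/
def Fmap {k l k' l' : ℕ} (F : D2Hom k l k' l') : FDHom k l k' l' :=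
  { ψ := FreeGroup.lift fun i : Fin k =>
      (yElt k' (optApply F.a (Fin.castSucc i)))⁻¹ * yElt k' (optApply F.a (Fin.succ i))
    u := fun i => yElt k' (optApply F.b i)
    f := ⇑F.c
    hf := F.c.monotone }


lemma filter_finRange (n m : ℕ) :
    (List.finRange n).filter (fun t : Fin n => decide ((t : ℕ) < m + 1)) =
    (List.finRange n).filter (fun t : Fin n => decide ((t : ℕ) < m)) ++
      if h : m < n then [⟨m, h⟩] else [] := by
  induction n with
  | zero => simp
  | succ n ih =>
    rw [List.finRange_succ_last, List.filter_append, List.filter_append,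
      List.filter_map, List.filter_map]
    have hc : ∀ ℓ : ℕ, (fun t : Fin n => decide ((t : ℕ) < ℓ)) =
        ((fun t : Fin (n+1) => decide ((t : ℕ) < ℓ)) ∘ Fin.castSucc) := by
      intro ℓ; funext t; simp
    rw [← hc, ← hc, ih]
    rcases lt_trichotomy m n with h | h | h
    · have h1 : ¬ ((Fin.last n : ℕ) < m + 1) := by simp [Fin.last]; omega
      have h2 : ¬ ((Fin.last n : ℕ) < m) := by simp [Fin.last]; omega
      rw [dif_pos h, dif_pos (by omega : m < n + 1)]
      simp [List.filter, h1, h2, Fin.castSucc, show ¬ n < m + 1 by omega, show ¬ n < m by omega]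
    · subst h
      have h1 : ((Fin.last m : ℕ) < m + 1) := by simp [Fin.last]
      have h2 : ¬ ((Fin.last m : ℕ) < m) := by simp [Fin.last]
      rw [dif_neg (lt_irrefl m), dif_pos (by omega : m < m + 1)]
      simp [List.filter, h1, h2, Fin.last, show m < m + 1 by omega, show ¬ m < m by omega]
    · have h1 : ((Fin.last n : ℕ) < m + 1) := by simp [Fin.last]; omega
      have h2 : ((Fin.last n : ℕ) < m) := by simp [Fin.last]; omega
      rw [dif_neg (by omega : ¬ m < n), dif_neg (by omega : ¬ m < n + 1)]
      simp [List.filter, h1, h2, show n < m + 1 by omega, show n < m from h]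

lemma yElt_zero (k' : ℕ) : yElt k' 0 = 1 := by
  simp [yElt]

lemma yElt_succ (k' m : ℕ) :
    yElt k' (m + 1) = yElt k' m * (if h : m < k' then FreeGroup.of (⟨m, h⟩ : Fin k') else 1) := by
  unfold yElt
  rw [filter_finRange]
  split <;> simp

lemma lift_eq_one {α : Type*} {G : Type*} [Group G] (f : α → G) (h : ∀ a, f a = 1)
    (w : FreeGroup α) : FreeGroup.lift f w = 1 := by
  have : FreeGroup.lift f = (1 : FreeGroup α →* G) := by
    ext a
    simp [h]
  rw [this]
  rfl

lemma lift_const_one {α : Type*} {G : Type*} [Group G]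
    (w : FreeGroup α) : FreeGroup.lift (fun _ : α => (1 : G)) w = 1 :=
  lift_eq_one _ (fun _ => rfl) w

lemma psi_yElt {k₁ k₂ : ℕ} (a' : Fin (k₁ + 1) →o Fin (k₂ + 1)) (m : ℕ) (hm : m ≤ k₁) :
    FreeGroup.lift (fun i : Fin k₁ =>
        (yElt k₂ (a' (Fin.castSucc i) : ℕ))⁻¹ * yElt k₂ (a' (Fin.succ i) : ℕ)) (yElt k₁ m) =
    (yElt k₂ (a' 0 : ℕ))⁻¹ * yElt k₂ (a' ⟨m, Nat.lt_succ_of_le hm⟩ : ℕ) := by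
  induction m with
  | zero =>
      rw [yElt_zero, map_one]
      have : (⟨0, Nat.lt_succ_of_le (Nat.zero_le k₁)⟩ : Fin (k₁ + 1)) = 0 := rfl
      simp [this]
  | succ m ih =>
      have hm' : m < k₁ := hm
      rw [yElt_succ, dif_pos hm', map_mul, ih (le_of_lt hm'), FreeGroup.lift_apply_of]
      have h1 : Fin.castSucc (⟨m, hm'⟩ : Fin k₁) = ⟨m, Nat.lt_succ_of_le hm'.le⟩ := rfl
      have h2 : Fin.succ (⟨m, hm'⟩ : Fin k₁) = ⟨m + 1, Nat.lt_succ_of_le hm⟩ := rfl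
      rw [h1, h2, mul_assoc, ← mul_assoc (yElt k₂ (a' ⟨m, _⟩ : ℕ)), mul_inv_cancel, one_mul]

/-- Section 2.6: `F` is compatible with composition up to the
`𝔽Δ`-equivalence: `F((a',b',c') ∘ (a,b,c)) ∼ F(a',b',c') ∘ F(a,b,c)`. -/
theorem statement14 :
    ∀ (k₀ l₀ k₁ l₁ k₂ l₂ : ℕ) (F : D2Hom k₀ l₀ k₁ l₁) (G : D2Hom k₁ l₁ k₂ l₂),
      FDrel (Fmap (D2comp G F)) (FDcomp (Fmap G) (Fmap F)) := by
  intro k₀ l₀ k₁ l₁ k₂ l₂ F G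
  obtain ⟨Fa, Fb, Fc, hF⟩ := F
  obtain ⟨Ga, Gb, Gc, hG⟩ := G
  cases Gb with
  | some b' =>
      -- then Ga = none
      have hGa : Ga = none := hG.resolve_right (by simp)
      subst hGa
      refine ⟨rfl, 1, ?_, ?_⟩
      · intro w
        have h1 : ∀ w', (Fmap ⟨none, some b', Gc, hG⟩ : FDHom k₁ l₁ k₂ l₂).ψ w' = 1 := by
          intro w'
          exact lift_eq_one _ (fun i => by simp [optApply]) w'
        simp only [FDcomp, MonoidHom.coe_comp, Function.comp_apply, h1]
        have h2 : (Fmap (D2comp ⟨none, some b', Gc, hG⟩ ⟨Fa, Fb, Fc, hF⟩)).ψ w = 1 := by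
          exact lift_eq_one _ (fun i => by simp [D2comp, optApply]) w
        simp [h2]
      · intro i
        have h1 : (Fmap ⟨none, some b', Gc, hG⟩ : FDHom k₁ l₁ k₂ l₂).ψ
            ((Fmap ⟨Fa, Fb, Fc, hF⟩).u i) = 1 :=
          lift_eq_one _ (fun j => by simp [optApply]) _
        simp only [FDcomp, h1, one_mul, inv_one]
        simp [Fmap, D2comp, optApply]
  | none =>
      cases Ga with
      | none =>
          refine ⟨rfl, 1, ?_, ?_⟩
          · intro w
            have h1 : ∀ w', (Fmap ⟨none, none, Gc, hG⟩ : FDHom k₁ l₁ k₂ l₂).ψ w' = 1 :=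
              fun w' => lift_eq_one _ (fun i => by simp [optApply]) w'
            have h2 : (Fmap (D2comp ⟨none, none, Gc, hG⟩ ⟨Fa, Fb, Fc, hF⟩)).ψ w = 1 :=
              lift_eq_one _ (fun i => by simp [D2comp, optApply]) w
            simp [FDcomp, h1, h2]
          · intro i
            have h1 : (Fmap ⟨none, none, Gc, hG⟩ : FDHom k₁ l₁ k₂ l₂).ψ
                ((Fmap ⟨Fa, Fb, Fc, hF⟩).u i) = 1 :=
              lift_eq_one _ (fun j => by simp [optApply]) _
            simp [FDcomp, h1, Fmap, D2comp, optApply, yElt_zero, lift_const_one]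
      | some a' =>
          cases Fa with
          | some af =>
              have hFb : Fb = none := hF.resolve_left (by simp)
              subst hFb
              refine ⟨rfl, 1, ?_, ?_⟩
              · intro w
                simp only [inv_one, one_mul, mul_one]
                have : (FDcomp (Fmap ⟨some a', none, Gc, hG⟩) (Fmap ⟨some af, none, Fc, hF⟩)).ψ
                    = (Fmap (D2comp ⟨some a', none, Gc, hG⟩ ⟨some af, none, Fc, hF⟩)).ψ := by
                  apply FreeGroup.ext_hom
                  intro i
                  simp only [FDcomp, MonoidHom.coe_comp, Function.comp_apply, Fmap,
                    FreeGroup.lift_apply_of, map_mul, map_inv, optApply]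
                  rw [psi_yElt a' _ (Fin.is_le _), psi_yElt a' _ (Fin.is_le _)]
                  have e1 : (⟨((af (Fin.castSucc i)) : ℕ), (af (Fin.castSucc i)).isLt⟩ : Fin (k₁+1)) = af (Fin.castSucc i) :=
                    Fin.eta _ _
                  have e2 : (⟨((af (Fin.succ i)) : ℕ), (af (Fin.succ i)).isLt⟩ : Fin (k₁+1)) = af (Fin.succ i) :=
                    Fin.eta _ _
                  rw [e1, e2]
                  have : ∀ j, optApply (some (a'.comp af) :
                      Option (Fin (k₀+1) →o Fin (k₂+1))) j = (a' (af j) : ℕ) := fun j => rfl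
                  simp only [D2comp, Option.bind_some, Option.map_some, this]
                  group
                  rfl
                rw [this]
              · intro i
                simp only [inv_one, one_mul]
                have h1 : (Fmap ⟨some a', none, Gc, hG⟩ : FDHom k₁ l₁ k₂ l₂).ψ
                    ((Fmap ⟨some af, none, Fc, hF⟩).u i) = 1 := by
                  have : (Fmap ⟨some af, none, Fc, hF⟩ : FDHom k₀ l₀ k₁ l₁).u i = 1 := by
                    simp [Fmap, optApply, yElt_zero]
                  rw [this, map_one]
                simp [FDcomp, h1, Fmap, D2comp, optApply, yElt_zero, lift_const_one]
          | none =>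
              cases Fb with
              | some bf =>
                  refine ⟨rfl, yElt k₂ (a' 0 : ℕ), ?_, ?_⟩
                  · intro w
                    have h2 : (Fmap (D2comp ⟨some a', none, Gc, hG⟩ ⟨none, some bf, Fc, hF⟩)).ψ w
                        = 1 := lift_eq_one _ (fun i => by simp [D2comp, optApply]) w
                    have h3 : (Fmap ⟨none, some bf, Fc, hF⟩ : FDHom k₀ l₀ k₁ l₁).ψ w = 1 :=
                      lift_eq_one _ (fun i => by simp [optApply]) w
                    simp [FDcomp, h2, h3]
                  · intro i
                    simp only [FDcomp, Fmap, D2comp, optApply]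
                    rw [psi_yElt a' _ (Fin.is_le _)]
                    have e1 : (⟨((bf i) : ℕ), (bf i).isLt⟩ : Fin (k₁+1)) = bf i := Fin.eta _ _
                    rw [e1, yElt_zero, mul_one]
                    rfl
              | none =>
                  refine ⟨rfl, 1, ?_, ?_⟩
                  · intro w
                    have h2 : (Fmap (D2comp ⟨some a', none, Gc, hG⟩ ⟨none, none, Fc, hF⟩)).ψ w
                        = 1 := lift_eq_one _ (fun i => by simp [D2comp, optApply]) w
                    have h3 : (Fmap ⟨none, none, Fc, hF⟩ : FDHom k₀ l₀ k₁ l₁).ψ w = 1 :=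
                      lift_eq_one _ (fun i => by simp [optApply]) w
                    simp [FDcomp, h2, h3]
                  · intro i
                    have h1 : (Fmap ⟨none, none, Fc, hF⟩ : FDHom k₀ l₀ k₁ l₁).u i = 1 := by
                      simp [Fmap, optApply, yElt_zero]
                    simp [FDcomp, h1, Fmap, D2comp, optApply, yElt_zero, lift_const_one]
end
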